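/- Let 0 ≤ γ ≤ 1, Γ = (3+2γ)/(6+3γ), Δx(1) = 1/2, Δx(k) = 2^{-k}(1-γ)^{k-2}(1+γ) for k ≥ 2, Δα(1) = ((3+γ)/(6+3γ))Δx(1), Δα(k) = ((1+γ)/(2+γ))Δx(k) for k ≥ 2, and Δβ(k) = Δx(k) - Δα(k). Then for all k ≥ 0: ∑_{ℓ=1}^{k} Δα(ℓ) + 2·Δβ(k+1) = Γ. -/

import Mathlib

noncomputable def dx (γ : ℝ) (k : ℕ) : ℝ :=
  if k = 1 then 1 / 2 else (1 / 2) ^ k * (1 - γ) ^ (k - 2) * (1 + γ)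

noncomputable def da (γ : ℝ) (k : ℕ) : ℝ :=
  if k = 1 then ((3 + γ) / (6 + 3 * γ)) * dx γ 1 else ((1 + γ) / (2 + γ)) * dx γ k

noncomputable def db (γ : ℝ) (k : ℕ) : ℝ := dx γ k - da γ k

theorem stmt9 (γ : ℝ) (h0 : 0 ≤ γ) (h1 : γ ≤ 1) (k : ℕ) :
    ∑ ℓ ∈ Finset.Icc 1 k, da γ ℓ + 2 * db γ (k + 1) = (3 + 2 * γ) / (6 + 3 * γ) := by
  have h2 : (2 : ℝ) + γ ≠ 0 := by linarith
  have h6 : (6 : ℝ) + 3 * γ ≠ 0 := by linarith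
  induction k with
  | zero =>
    simp [db, da, dx]
    field_simp
    ring
  | succ k ih =>
    rw [Finset.sum_Icc_succ_top (by omega)]
    have key : da γ (k + 1) + 2 * db γ (k + 2) = 2 * db γ (k + 1) := by
      rcases Nat.eq_zero_or_pos k with hk | hk
      · subst hk
        simp [db, da, dx]
        field_simp
        ring
      · have hk1 : k + 1 ≠ 1 := by omega
        have hk2 : k + 2 ≠ 1 := by omega
        simp only [db, da, dx, if_neg hk1, if_neg hk2]
        have e1 : k + 1 - 2 = k - 1 := by omega
        have e2 : k + 2 - 2 = k := by omega
        have e3 : k = (k - 1) + 1 := by omega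
        rw [e1, e2, e3, pow_succ, pow_succ]
        field_simp
        simp only [Nat.add_sub_cancel, Nat.add_sub_cancel_left]
        ring
    linarith [ih]
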